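/- If G is a finite filled group and N is a normal subgroup of G, then the quotient group G/N is filled. -/
import Mathlib


open Pointwise

/-- `S` is product-free if `S ∩ SS = ∅`. -/
def ProductFree {G : Type*} [Group G] (S : Set G) : Prop :=
  Disjoint S (S * S)

/-- `S` is locally maximal product-free if it is product-free and not properly
contained in any product-free set. -/
def LocallyMaximalPF {G : Type*} [Group G] (S : Set G) : Prop :=
  ProductFree S ∧ ∀ T : Set G, ProductFree T → S ⊆ T → S = T

/-- `S` fills `G` (is complete) if every non-identity element lies in `S ∪ SS`. -/
def Fills {G : Type*} [Group G] (S : Set G) : Prop :=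
  ∀ g : G, g ≠ 1 → g ∈ S ∪ S * S

/-- `G` is filled if every locally maximal product-free set fills `G`. -/
def Filled (G : Type*) [Group G] : Prop :=
  ∀ S : Set G, LocallyMaximalPF S → Fills S

theorem filled_quotient {G : Type*} [Group G] [Finite G] (hG : Filled G)
    (N : Subgroup G) [N.Normal] : Filled (G ⧸ N) := by
  intro Sb hSb
  have hPFb := hSb.1
  have hPFb' := Set.disjoint_left.mp hPFb
  have h1Sb : (1 : G ⧸ N) ∉ Sb := fun h => hPFb' h ⟨1, h, 1, h, one_mul 1⟩
  by_cases hne : Sb.Nonempty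
  · set π : G → G ⧸ N := QuotientGroup.mk with hπdef
    have hπs : Function.Surjective π := QuotientGroup.mk_surjective
    have hπm : ∀ x y : G, π (x * y) = π x * π y := fun x y => rfl
    have hπi : ∀ x : G, π x⁻¹ = (π x)⁻¹ := fun x => rfl
    set S : Set G := π ⁻¹' Sb with hSdef
    have hPFS : ProductFree S := by
      rw [ProductFree, Set.disjoint_left]
      rintro x hx ⟨y, hy, z, hz, rfl⟩
      exact hPFb' hx ⟨π y, hy, π z, hz, rfl⟩
    have key : ∀ T : Set G, ProductFree T → S ⊆ T → ∀ t ∈ T, π t ∈ Sb := by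
      intro T hT hST t ht
      have hT' := Set.disjoint_left.mp hT
      have ht1 : π t ≠ 1 := by
        intro h
        obtain ⟨sb, hsb⟩ := hne
        obtain ⟨s, rfl⟩ := hπs sb
        have hsS : s ∈ S := hsb
        have hts : t * s ∈ S := by
          show π (t * s) ∈ Sb
          rw [hπm, h, one_mul]; exact hsb
        exact hT' (hST hts) ⟨t, ht, s, hST hsS, rfl⟩
      have hU : ProductFree (Sb ∪ {π t}) := by
        rw [ProductFree, Set.disjoint_left]
        rintro c hc ⟨a, ha, b, hb, rfl⟩
        rcases ha with ha | ha
        · rcases hb with hb | hb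
          · rcases hc with hc | hc
            · exact hPFb' hc ⟨a, ha, b, hb, rfl⟩
            · -- a, b ∈ Sb, a*b = π t
              have hc' : a * b = π t := hc
              obtain ⟨x, rfl⟩ := hπs a
              have hxS : x ∈ S := ha
              have hy : x⁻¹ * t ∈ S := by
                show π (x⁻¹ * t) ∈ Sb
                have : π (x⁻¹ * t) = b := by
                  rw [hπm, hπi, ← hc']; group
                rw [this]; exact hb
              refine hT' ht ⟨x, hST hxS, x⁻¹ * t, hST hy, by group⟩
          · -- a ∈ Sb, b = π t
            have hb' : b = π t := hb
            rcases hc with hc | hc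
            · obtain ⟨z, hz⟩ := hπs (a * b)
              have hzS : z ∈ S := by show π z ∈ Sb; rw [hz]; exact hc
              have hw : z * t⁻¹ ∈ S := by
                show π (z * t⁻¹) ∈ Sb
                have : π (z * t⁻¹) = a := by
                  rw [hπm, hπi, hz, hb']; group
                rw [this]; exact ha
              exact hT' (hST hzS) ⟨z * t⁻¹, hST hw, t, ht, by group⟩
            · have hc' : a * b = π t := hc
              have : a = 1 := by
                rw [hb'] at hc'
                exact mul_right_cancel (by rw [hc', one_mul])
              exact h1Sb (this ▸ ha)
        · -- a = π t
          have ha' : a = π t := ha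
          rcases hb with hb | hb
          · rcases hc with hc | hc
            · obtain ⟨z, hz⟩ := hπs (a * b)
              have hzS : z ∈ S := by show π z ∈ Sb; rw [hz]; exact hc
              have hw : t⁻¹ * z ∈ S := by
                show π (t⁻¹ * z) ∈ Sb
                have : π (t⁻¹ * z) = b := by
                  rw [hπm, hπi, hz, ha']; group
                rw [this]; exact hb
              exact hT' (hST hzS) ⟨t, ht, t⁻¹ * z, hST hw, by group⟩
            · have hc' : a * b = π t := hc
              have : b = 1 := by
                rw [ha'] at hc'
                exact mul_left_cancel (by rw [hc', mul_one])
              exact h1Sb (this ▸ hb)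
          · have hb' : b = π t := hb
            have ha' : a = π t := ha
            rcases hc with hc | hc
            · have hc' : a * b ∈ Sb := hc
              rw [ha', hb'] at hc'
              have htt : t * t ∈ S := by
                show π (t * t) ∈ Sb
                rw [hπm]; exact hc'
              exact hT' (hST htt) ⟨t, ht, t, ht, rfl⟩
            · have hc' : a * b = π t := hc
              rw [ha', hb'] at hc'
              exact ht1 (mul_left_cancel (by rw [hc', mul_one]))
      have := hSb.2 (Sb ∪ {π t}) hU Set.subset_union_left
      rw [this]
      exact Or.inr rfl
    have hLM : LocallyMaximalPF S :=
      ⟨hPFS, fun T hT hST => Set.Subset.antisymm hST (fun t ht => key T hT hST t ht)⟩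
    have hF := hG S hLM
    intro gb hgb
    obtain ⟨g, rfl⟩ := hπs gb
    have hg1 : g ≠ 1 := fun h => hgb (by rw [h]; rfl)
    rcases hF g hg1 with hg | ⟨x, hx, y, hy, rfl⟩
    · exact Or.inl hg
    · exact Or.inr ⟨π x, hx, π y, hy, rfl⟩
  · rw [Set.not_nonempty_iff_eq_empty] at hne
    intro g hg
    exfalso
    have hPFg : ProductFree ({g} : Set (G ⧸ N)) := by
      rw [ProductFree, Set.disjoint_left]
      rintro c hc ⟨a, ha, b, hb, hab⟩
      rw [Set.mem_singleton_iff] at hc ha hb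
      rw [ha, hb, hc] at hab
      exact hg (mul_left_cancel (a := g) (by rw [mul_one]; exact hab))
    have := hSb.2 {g} hPFg (hne ▸ Set.empty_subset _)
    rw [hne] at this
    exact Set.singleton_ne_empty g this.symm
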